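/- Let C ⊂ ℝ be a finite set and let π = (π₁,…,π_n) and σ = (σ₁,…,σ_m) be curves in ℝ^d, equipped with the L₁ norm, such that every coordinate of every point π_i and every point σ_j lies in C. Then there exists a translation τ* ∈ ℝ^d with every coordinate in C − C = {x − y : x, y ∈ C}, such that d_DTW(π, σ+τ*) ≤ d_DTW(π, σ+τ) for all τ ∈ ℝ^d. -/

import Mathlib

open Finset

/-- A traversal of two curves of lengths `n` and `m` (1-indexed): a nonempty list of
index pairs starting at `(1,1)`, ending at `(n,m)`, where each step increases the first
index, the second index, or both, by one. -/
def IsTraversal (n m : ℕ) (T : List (ℕ × ℕ)) : Prop :=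
  T.head? = some (1, 1) ∧ T.getLast? = some (n, m) ∧
  ∀ ℓ : ℕ, ℓ + 1 < T.length →
    T.getD (ℓ + 1) (0, 0) = ((T.getD ℓ (0, 0)).1 + 1, (T.getD ℓ (0, 0)).2) ∨
    T.getD (ℓ + 1) (0, 0) = ((T.getD ℓ (0, 0)).1, (T.getD ℓ (0, 0)).2 + 1) ∨
    T.getD (ℓ + 1) (0, 0) = ((T.getD ℓ (0, 0)).1 + 1, (T.getD ℓ (0, 0)).2 + 1)

/-- The `L₁` norm on `ℝ^d`. -/
def l1norm {d : ℕ} (x : Fin d → ℝ) : ℝ := ∑ k, |x k|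

/-- The dynamic time warping distance, with respect to the `L₁` norm on `ℝ^d`, of two
curves `π = (π 1, …, π n)` and `σ = (σ 1, …, σ m)`: the minimum, over all traversals, of
the sum of the `L₁` distances of the paired points. -/
noncomputable def dtwL1 {d : ℕ} (n m : ℕ) (π σ : ℕ → Fin d → ℝ) : ℝ :=
  sInf {c : ℝ | ∃ T : List (ℕ × ℕ), IsTraversal n m T ∧
    (T.map fun p => l1norm (π p.1 - σ p.2)).sum = c}

lemma list_sum_map_sum {α : Type*} {d : ℕ} (T : List α) (f : α → Fin d → ℝ) :
    (T.map fun p => ∑ k, f p k).sum = ∑ k, (T.map fun p => f p k).sum := by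
  induction T with
  | nil => simp
  | cons x T ih => simp [ih, Finset.sum_add_distrib]

lemma median_shift_up (a : List ℝ) (s t : ℝ) (hst : s ≤ t) (ht : ∀ x ∈ a, s ≤ x → t ≤ x) :
    (a.map fun x => |x - t|).sum
      = (a.map fun x => |x - s|).sum
        + (t - s) * (((a.filter fun x => decide (x < s)).length : ℝ)
          - ((a.filter fun x => decide (¬ x < s)).length : ℝ)) := by
  induction a with
  | nil => simp
  | cons x a ih =>
    have ih' := ih (fun y hy => ht y (List.mem_cons_of_mem _ hy))
    by_cases hx : x < s
    · have h1 : |x - t| = t - x := by rw [abs_of_nonpos (by linarith)]; ring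
      have h2 : |x - s| = s - x := by rw [abs_of_nonpos (by linarith)]; ring
      simp [List.filter_cons, hx, ih', h1, h2]
      push_cast
      ring
    · have hsx : s ≤ x := le_of_not_gt hx
      have htx : t ≤ x := ht x List.mem_cons_self hsx
      have h1 : |x - t| = x - t := abs_of_nonneg (by linarith)
      have h2 : |x - s| = x - s := abs_of_nonneg (by linarith)
      simp [List.filter_cons, hx, hsx, ih', h1, h2]
      push_cast
      ring

lemma median_shift_down (a : List ℝ) (s t : ℝ) (hts : t ≤ s) (ht : ∀ x ∈ a, x < s → x ≤ t) :
    (a.map fun x => |x - t|).sum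
      = (a.map fun x => |x - s|).sum
        + (s - t) * (((a.filter fun x => decide (¬ x < s)).length : ℝ)
          - ((a.filter fun x => decide (x < s)).length : ℝ)) := by
  induction a with
  | nil => simp
  | cons x a ih =>
    have ih' := ih (fun y hy => ht y (List.mem_cons_of_mem _ hy))
    by_cases hx : x < s
    · have hxt : x ≤ t := ht x List.mem_cons_self hx
      have h1 : |x - t| = t - x := by rw [abs_of_nonpos (by linarith)]; ring
      have h2 : |x - s| = s - x := by rw [abs_of_nonpos (by linarith)]; ring
      simp [List.filter_cons, hx, ih', h1, h2]
      push_cast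
      ring
    · have hsx : s ≤ x := le_of_not_gt hx
      have h1 : |x - t| = x - t := abs_of_nonneg (by linarith)
      have h2 : |x - s| = x - s := abs_of_nonneg (by linarith)
      simp [List.filter_cons, hx, hsx, ih', h1, h2]
      push_cast
      ring

lemma filter_length_split (s : ℝ) (a : List ℝ) :
    a.length = (a.filter fun x => decide (x < s)).length
      + (a.filter fun x => decide (¬ x < s)).length := by
  induction a with
  | nil => simp
  | cons x l ih =>
    rw [List.filter_cons, List.filter_cons]
    by_cases hx : x < s
    · rw [if_pos (by simpa using hx), if_neg (by simpa using hx)]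
      simp only [List.length_cons]
      omega
    · rw [if_neg (by simpa using hx), if_pos (by simpa using hx)]
      simp only [List.length_cons]
      omega

lemma exists_median (a : List ℝ) (ha : a ≠ []) (s : ℝ) :
    ∃ t ∈ a, (a.map fun x => |x - t|).sum ≤ (a.map fun x => |x - s|).sum := by
  set Q := (a.filter fun x => decide (x < s)).length with hQ
  set P := (a.filter fun x => decide (¬ x < s)).length with hP
  have hlen : a.length = Q + P := filter_length_split s a
  have hlenpos : 0 < a.length := List.length_pos_iff.2 ha
  by_cases hQP : Q ≤ P
  · -- take t = min of elements ≥ s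
    have hfne : (a.filter fun x => decide (¬ x < s)) ≠ [] := by
      intro h
      have : P = 0 := by rw [hP, h]; rfl
      omega
    have hFne : (a.filter fun x => decide (¬ x < s)).toFinset.Nonempty := by
      rw [List.toFinset_nonempty_iff]; exact hfne
    set t := (a.filter fun x => decide (¬ x < s)).toFinset.min' hFne with htdef
    have htmem' : t ∈ (a.filter fun x => decide (¬ x < s)) :=
      List.mem_toFinset.1 ((a.filter fun x => decide (¬ x < s)).toFinset.min'_mem hFne)
    have htmem : t ∈ a := (List.mem_filter.1 htmem').1
    have hst : s ≤ t := by
      have := (List.mem_filter.1 htmem').2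
      simp at this
      exact this
    have hmin : ∀ x ∈ a, s ≤ x → t ≤ x := by
      intro x hx hsx
      exact Finset.min'_le _ _ (List.mem_toFinset.2 (List.mem_filter.2 ⟨hx, by simpa using hsx⟩))
    refine ⟨t, htmem, ?_⟩
    rw [median_shift_up a s t hst hmin]
    have : (t - s) * ((Q : ℝ) - (P : ℝ)) ≤ 0 :=
      mul_nonpos_of_nonneg_of_nonpos (by linarith)
        (by rw [sub_nonpos]; exact_mod_cast hQP)
    linarith
  · -- take t = max of elements < s
    push_neg at hQP
    have hfne : (a.filter fun x => decide (x < s)) ≠ [] := by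
      intro h
      have : Q = 0 := by rw [hQ, h]; rfl
      omega
    have hFne : (a.filter fun x => decide (x < s)).toFinset.Nonempty := by
      rw [List.toFinset_nonempty_iff]; exact hfne
    set t := (a.filter fun x => decide (x < s)).toFinset.max' hFne with htdef
    have htmem' : t ∈ (a.filter fun x => decide (x < s)) :=
      List.mem_toFinset.1 ((a.filter fun x => decide (x < s)).toFinset.max'_mem hFne)
    have htmem : t ∈ a := (List.mem_filter.1 htmem').1
    have hts : t ≤ s := by
      have := (List.mem_filter.1 htmem').2
      simp at this
      linarith
    have hmax : ∀ x ∈ a, x < s → x ≤ t := by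
      intro x hx hxs
      exact Finset.le_max' _ _ (List.mem_toFinset.2 (List.mem_filter.2 ⟨hx, by simpa using hxs⟩))
    refine ⟨t, htmem, ?_⟩
    rw [median_shift_down a s t hts hmax]
    have : (s - t) * ((P : ℝ) - (Q : ℝ)) ≤ 0 :=
      mul_nonpos_of_nonneg_of_nonpos (by linarith)
        (by rw [sub_nonpos]; exact_mod_cast hQP.le)
    linarith

lemma traversal_ne_nil {n m : ℕ} {T : List (ℕ × ℕ)} (h : IsTraversal n m T) : T ≠ [] := by
  intro hT
  rw [hT] at h
  simp [IsTraversal] at h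

lemma traversal_bounds {n m : ℕ} {T : List (ℕ × ℕ)} (h : IsTraversal n m T) :
    ∀ p ∈ T, (1 ≤ p.1 ∧ p.1 ≤ n) ∧ (1 ≤ p.2 ∧ p.2 ≤ m) := by
  obtain ⟨hh, hl, hstep⟩ := h
  have hne : T ≠ [] := by
    intro hT; rw [hT] at hh; simp at hh
  have hlenpos : 0 < T.length := List.length_pos_iff.2 hne
  have h0 : T.getD 0 (0, 0) = (1, 1) := by
    rw [List.getD_eq_getElem _ _ hlenpos]
    have : T.head? = T[0]? := List.head?_eq_getElem?
    rw [hh] at this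
    rw [List.getElem?_eq_getElem hlenpos] at this
    exact (Option.some_injective _ this.symm)
  have hlast : T.getD (T.length - 1) (0, 0) = (n, m) := by
    have hlt : T.length - 1 < T.length := by omega
    rw [List.getD_eq_getElem _ _ hlt]
    have : T.getLast? = T[T.length - 1]? := List.getLast?_eq_getElem?
    rw [hl] at this
    rw [List.getElem?_eq_getElem hlt] at this
    exact (Option.some_injective _ this.symm)
  have mono : ∀ b a : ℕ, a + b < T.length →
      (T.getD a (0,0)).1 ≤ (T.getD (a+b) (0,0)).1 ∧
      (T.getD a (0,0)).2 ≤ (T.getD (a+b) (0,0)).2 := by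
    intro b
    induction b with
    | zero => intro a _; exact ⟨le_refl _, le_refl _⟩
    | succ b ih =>
      intro a hab
      have h1 : a + b < T.length := by omega
      have h2 := ih a h1
      have h3 := hstep (a + b) (by omega)
      have : a + (b + 1) = (a + b) + 1 := by omega
      rw [this]
      rcases h3 with h3 | h3 | h3 <;> rw [h3] <;> refine ⟨?_, ?_⟩ <;> dsimp only <;> omega
  intro p hp
  obtain ⟨i, hi, hpi⟩ := List.mem_iff_getElem.1 hp
  have hgd : T.getD i (0,0) = p := by rw [List.getD_eq_getElem _ _ hi, hpi]
  have hlow := mono i 0 (by omega)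
  rw [h0] at hlow
  simp only [Nat.zero_add] at hlow
  rw [hgd] at hlow
  have hi' : i + (T.length - 1 - i) = T.length - 1 := by omega
  have hhigh := mono (T.length - 1 - i) i (by omega)
  rw [hi', hgd, hlast] at hhigh
  exact ⟨⟨hlow.1, hhigh.1⟩, ⟨hlow.2, hhigh.2⟩⟩

lemma exists_traversal (n m : ℕ) (hn : 1 ≤ n) (hm : 1 ≤ m) :
    ∃ T : List (ℕ × ℕ), IsTraversal n m T := by
  refine ⟨(List.range (n + m - 1)).map (fun ℓ => (min (ℓ + 1) n, ℓ + 2 - min (ℓ + 1) n)), ?_, ?_, ?_⟩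
  · rw [List.head?_eq_getElem?]
    rw [List.getElem?_eq_getElem (by simp; omega)]
    simp
    constructor <;> omega
  · rw [List.getLast?_eq_getElem?]
    rw [List.getElem?_eq_getElem (by simp; omega)]
    simp
    constructor <;> omega
  · intro ℓ hℓ
    simp only [List.length_map, List.length_range] at hℓ
    rw [List.getD_eq_getElem _ _ (by simp; omega), List.getD_eq_getElem _ _ (by simp; omega)]
    simp only [List.getElem_map, List.getElem_range]
    by_cases h1 : ℓ + 2 ≤ n
    · left; simp [Prod.ext_iff]; omega
    · right; left; simp [Prod.ext_iff]; omega

lemma l1norm_nonneg {d : ℕ} (x : Fin d → ℝ) : 0 ≤ l1norm x :=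
  Finset.sum_nonneg fun k _ => abs_nonneg _

lemma dtw_bddBelow {d : ℕ} (n m : ℕ) (π σ' : ℕ → Fin d → ℝ) :
    BddBelow {c : ℝ | ∃ T : List (ℕ × ℕ), IsTraversal n m T ∧
      (T.map fun p => l1norm (π p.1 - σ' p.2)).sum = c} := by
  refine ⟨0, fun c hc => ?_⟩
  obtain ⟨T, _, hc⟩ := hc
  rw [← hc]
  apply List.sum_nonneg
  intro x hx
  obtain ⟨p, _, hp⟩ := List.mem_map.1 hx
  rw [← hp]
  exact l1norm_nonneg _

lemma dtwL1_le_cost {d : ℕ} {n m : ℕ} (π σ' : ℕ → Fin d → ℝ) {T : List (ℕ × ℕ)}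
    (hT : IsTraversal n m T) :
    dtwL1 n m π σ' ≤ (T.map fun p => l1norm (π p.1 - σ' p.2)).sum :=
  csInf_le (dtw_bddBelow n m π σ') ⟨T, hT, rfl⟩

lemma cost_eq {d : ℕ} (π σ : ℕ → Fin d → ℝ) (τ : Fin d → ℝ) (T : List (ℕ × ℕ)) :
    (T.map fun p => l1norm (π p.1 - (fun j => σ j + τ) p.2)).sum
      = ∑ k, ((T.map fun p => π p.1 k - σ p.2 k).map fun x => |x - τ k|).sum := by
  have h1 : (fun p : ℕ × ℕ => l1norm (π p.1 - (fun j => σ j + τ) p.2))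
      = fun p => ∑ k, |π p.1 k - σ p.2 k - τ k| := by
    funext p
    simp only [l1norm, Pi.sub_apply, Pi.add_apply, sub_add_eq_sub_sub]
  rw [h1, list_sum_map_sum T (fun p k => |π p.1 k - σ p.2 k - τ k|)]
  apply Finset.sum_congr rfl
  intro k _
  rw [List.map_map]
  rfl


/-- If all coordinates of all points of `π` and `σ` lie in a finite set `C ⊂ ℝ`, then (for
the `L₁` norm) there is a global minimizer `τ*` of `τ ↦ d_DTW(π, σ + τ)` all of whose
coordinates lie in `C - C = {x - y : x, y ∈ C}`. -/
theorem dtwL1_min_on_difference_set (d n m : ℕ) (hn : 1 ≤ n) (hm : 1 ≤ m)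
    (C : Finset ℝ) (π σ : ℕ → Fin d → ℝ)
    (hπ : ∀ i ∈ Finset.Icc 1 n, ∀ k : Fin d, π i k ∈ C)
    (hσ : ∀ j ∈ Finset.Icc 1 m, ∀ k : Fin d, σ j k ∈ C) :
    ∃ τs : Fin d → ℝ, (∀ k : Fin d, ∃ x ∈ C, ∃ y ∈ C, τs k = x - y) ∧
      ∀ τ : Fin d → ℝ, dtwL1 n m π (fun j => σ j + τs) ≤ dtwL1 n m π (fun j => σ j + τ) := by
  classical
  set D : Finset ℝ := (C ×ˢ C).image (fun p => p.1 - p.2) with hD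
  have hDne : ∀ _ : Fin d, D.Nonempty := by
    intro k
    have h1 : π 1 k ∈ C := hπ 1 (Finset.mem_Icc.2 ⟨le_refl 1, hn⟩) k
    exact ⟨π 1 k - π 1 k, Finset.mem_image.2 ⟨(π 1 k, π 1 k),
      Finset.mem_product.2 ⟨h1, h1⟩, rfl⟩⟩
  have hSne : (Fintype.piFinset fun _ : Fin d => D).Nonempty :=
    Fintype.piFinset_nonempty.2 hDne
  obtain ⟨τs, hτsS, hτsmin⟩ := Finset.exists_min_image
    (Fintype.piFinset fun _ : Fin d => D)
    (fun τ => dtwL1 n m π (fun j => σ j + τ)) hSne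
  refine ⟨τs, ?_, ?_⟩
  · intro k
    have hk := (Fintype.mem_piFinset.1 hτsS) k
    rw [hD, Finset.mem_image] at hk
    obtain ⟨p, hp, hpe⟩ := hk
    rw [Finset.mem_product] at hp
    exact ⟨p.1, hp.1, p.2, hp.2, hpe.symm⟩
  · intro τ
    -- obtain a nonempty cost set for τ and prove the bound elementwise
    obtain ⟨T0, hT0⟩ := exists_traversal n m hn hm
    refine le_csInf ⟨_, ⟨T0, hT0, rfl⟩⟩ ?_
    rintro c ⟨T, hT, rfl⟩
    have hTne : T ≠ [] := by
      intro h
      rw [h] at hT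
      simp [IsTraversal] at hT
    -- per-coordinate lists of differences
    set a : Fin d → List ℝ := fun k => T.map (fun p => π p.1 k - σ p.2 k) with ha
    have hane : ∀ k, a k ≠ [] := by
      intro k h
      exact hTne (by simpa [ha] using h)
    have hmed : ∀ k, ∃ t ∈ a k,
        ((a k).map fun x => |x - t|).sum ≤ ((a k).map fun x => |x - τ k|).sum :=
      fun k => exists_median (a k) (hane k) (τ k)
    choose t htmem htle using hmed
    have htS : t ∈ Fintype.piFinset fun _ : Fin d => D := by
      rw [Fintype.mem_piFinset]
      intro k
      obtain ⟨p, hpT, hpt⟩ := List.mem_map.1 (htmem k)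
      obtain ⟨⟨hi1, hi2⟩, ⟨hj1, hj2⟩⟩ := traversal_bounds hT p hpT
      rw [hD, Finset.mem_image]
      exact ⟨(π p.1 k, σ p.2 k), Finset.mem_product.2
        ⟨hπ p.1 (Finset.mem_Icc.2 ⟨hi1, hi2⟩) k, hσ p.2 (Finset.mem_Icc.2 ⟨hj1, hj2⟩) k⟩, hpt⟩
    calc dtwL1 n m π (fun j => σ j + τs)
        ≤ dtwL1 n m π (fun j => σ j + t) := hτsmin t htS
      _ ≤ (T.map fun p => l1norm (π p.1 - (fun j => σ j + t) p.2)).sum :=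
          dtwL1_le_cost π _ hT
      _ ≤ (T.map fun p => l1norm (π p.1 - (fun j => σ j + τ) p.2)).sum := by
          rw [cost_eq π σ t T, cost_eq π σ τ T]
          exact Finset.sum_le_sum fun k _ => htle k
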